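/- Let p be a prime, j, k ∈ {1,...,p-1}, and l with k·l ≡ j (mod p), 1 ≤ l ≤ p-1. With v_j and cyclic shifts as before, (l/p)·𝟙 + Σ_{i=0}^{p-2} ((p-i-1)/p) · v_j^{(ik)} = Σ_{a=0}^{l-1} e_0^{(ak)}, where e_0^{(ak)} is the indicator of index a·k mod p. -/
import Mathlib


/-- The vector with value `1` at index `0`, `-1` at index `j` and `0` elsewhere. -/
def vj (p : ℕ) (j x : ZMod p) : ℚ :=
  if x = 0 then 1 else if x = j then -1 else 0

theorem stmt_18 (p : ℕ) [Fact p.Prime] (j k : ZMod p) (hj : j ≠ 0) (hk : k ≠ 0)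
    (l : ℕ) (hl1 : 1 ≤ l) (hlp : l ≤ p - 1) (hkl : k * (l : ZMod p) = j) :
    (fun x : ZMod p =>
        (l : ℚ) / p + ∑ i ∈ Finset.range (p - 1),
          (((p : ℚ) - i - 1) / p) * vj p j (x - (i : ZMod p) * k)) =
      fun x : ZMod p => ∑ a ∈ Finset.range l,
        if x = (a : ZMod p) * k then (1 : ℚ) else 0 := by
  have hp : p.Prime := Fact.out
  haveI : NeZero p := ⟨hp.ne_zero⟩
  have hp2 : 2 ≤ p := hp.two_le
  have hpQ : (p : ℚ) ≠ 0 := Nat.cast_ne_zero.mpr hp.ne_zero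
  have hlp' : l < p := by omega
  funext x
  set y0 : ZMod p := x * k⁻¹ with hy0def
  have hy0 : y0 * k = x := by
    rw [hy0def, mul_assoc, inv_mul_cancel₀ hk, mul_one]
  set n0 := y0.val with hn0def
  have hn0p : n0 < p := ZMod.val_lt y0
  have hcastn0 : ((n0 : ℕ) : ZMod p) = y0 := by
    rw [hn0def, ZMod.natCast_val, ZMod.cast_id]
  set y1 : ZMod p := y0 - (l : ZMod p) with hy1def
  set n1 := y1.val with hn1def
  have hn1p : n1 < p := ZMod.val_lt y1
  have hcastn1 : ((n1 : ℕ) : ZMod p) = y1 := by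
    rw [hn1def, ZMod.natCast_val, ZMod.cast_id]
  have hy1 : x - (l : ZMod p) * k = y1 * k := by
    rw [hy1def, sub_mul, hy0]
  -- key equivalences
  have key0 : ∀ a : ℕ, a < p → ((x - (a : ZMod p) * k = 0) ↔ a = n0) := by
    intro a ha
    constructor
    · intro h
      have h' : (a : ZMod p) * k = y0 * k := by
        rw [hy0]; linear_combination -h
      have h2 : (a : ZMod p) = y0 := mul_right_cancel₀ hk h'
      have := congrArg ZMod.val h2
      rwa [ZMod.val_cast_of_lt ha] at this
    · intro h
      subst h
      rw [hcastn0, hy0, sub_self]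
  have key1 : ∀ a : ℕ, a < p → ((x - (a : ZMod p) * k = j) ↔ a = n1) := by
    intro a ha
    have hj' : j = (l : ZMod p) * k := by rw [← hkl]; ring
    constructor
    · intro h
      have h' : (a : ZMod p) * k = y1 * k := by
        linear_combination -h - hj' + hy1
      have h2 : (a : ZMod p) = y1 := mul_right_cancel₀ hk h'
      have := congrArg ZMod.val h2
      rwa [ZMod.val_cast_of_lt ha] at this
    · intro h
      subst h
      rw [hcastn1]
      linear_combination hy1 - hj'
  -- vj decomposition
  have hvj : ∀ y : ZMod p, vj p j y =
      (if y = 0 then (1:ℚ) else 0) - (if y = j then 1 else 0) := by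
    intro y
    unfold vj
    by_cases h0 : y = 0
    · simp [h0, Ne.symm hj]
    · by_cases h1 : y = j <;> simp [h0, h1, hj]
  -- RHS
  have hRHS : (∑ a ∈ Finset.range l, if x = (a : ZMod p) * k then (1 : ℚ) else 0)
      = if n0 < l then 1 else 0 := by
    rw [Finset.sum_congr rfl (fun a ha => ?_), Finset.sum_ite_eq' (Finset.range l) n0 (fun _ => (1:ℚ))]
    · simp [Finset.mem_range]
    · have ha' : a < p := lt_of_lt_of_le (Finset.mem_range.mp ha) (le_of_lt hlp')
      have : (x = (a : ZMod p) * k) ↔ a = n0 := by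
        rw [← key0 a ha', sub_eq_zero]
      simp only [this]
  rw [hRHS]
  -- LHS: rewrite each summand
  have hsummand : ∀ i ∈ Finset.range p,
      (((p : ℚ) - i - 1) / p) * vj p j (x - (i : ZMod p) * k)
      = (((p : ℚ) - i - 1) / p) * ((if i = n0 then (1:ℚ) else 0) - (if i = n1 then 1 else 0)) := by
    intro i hi
    have hi' : i < p := Finset.mem_range.mp hi
    rw [hvj]
    simp only [key0 i hi', key1 i hi']
  -- extend sum to range p
  have hext : (∑ i ∈ Finset.range (p - 1),
        (((p : ℚ) - i - 1) / p) * vj p j (x - (i : ZMod p) * k))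
      = ∑ i ∈ Finset.range p,
        (((p : ℚ) - i - 1) / p) * vj p j (x - (i : ZMod p) * k) := by
    have hz : (((p : ℚ) - ((p - 1 : ℕ) : ℚ) - 1) / p) * vj p j (x - ((p - 1 : ℕ) : ZMod p) * k) = 0 := by
      have h1 : ((p - 1 : ℕ) : ℚ) = (p : ℚ) - 1 := by
        push_cast [Nat.cast_sub (by omega : 1 ≤ p)]; ring
      rw [h1]
      have : ((p : ℚ) - ((p : ℚ) - 1) - 1) = 0 := by ring
      rw [this]
      simp
    have hstep := Finset.sum_range_succ
      (fun i : ℕ => (((p : ℚ) - i - 1) / p) * vj p j (x - (i : ZMod p) * k)) (p - 1)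
    rw [show p - 1 + 1 = p by omega] at hstep
    rw [hstep, hz, add_zero]
  rw [hext, Finset.sum_congr rfl hsummand]
  simp only [mul_sub]
  rw [Finset.sum_sub_distrib]
  have e0 : (∑ i ∈ Finset.range p, (((p : ℚ) - i - 1) / p) * (if i = n0 then (1:ℚ) else 0))
      = ((p : ℚ) - n0 - 1) / p := by
    simp only [mul_ite, mul_one, mul_zero]
    rw [Finset.sum_ite_eq' (Finset.range p) n0]
    simp [Finset.mem_range, hn0p]
  have e1 : (∑ i ∈ Finset.range p, (((p : ℚ) - i - 1) / p) * (if i = n1 then (1:ℚ) else 0))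
      = ((p : ℚ) - n1 - 1) / p := by
    simp only [mul_ite, mul_one, mul_zero]
    rw [Finset.sum_ite_eq' (Finset.range p) n1]
    simp [Finset.mem_range, hn1p]
  rw [e0, e1]
  -- compute n1 from n0
  by_cases hcase : n0 < l
  · -- n1 = n0 + p - l
    have hn1 : n1 = n0 + p - l := by
      have hlt : n0 + p - l < p := by omega
      have : ((n0 + p - l : ℕ) : ZMod p) = y1 := by
        rw [hy1def, ← hcastn0]
        push_cast [Nat.cast_sub (by omega : l ≤ n0 + p)]
        simp [ZMod.natCast_self]
      have h2 := congrArg ZMod.val this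
      rw [ZMod.val_cast_of_lt hlt] at h2
      omega
    rw [if_pos hcase, hn1]
    have hcast : ((n0 + p - l : ℕ) : ℚ) = (n0 : ℚ) + p - l := by
      push_cast [Nat.cast_sub (by omega : l ≤ n0 + p)]; ring
    rw [hcast]
    field_simp
    try ring
  · -- n1 = n0 - l
    have hn1 : n1 = n0 - l := by
      have hlt : n0 - l < p := by omega
      have : ((n0 - l : ℕ) : ZMod p) = y1 := by
        rw [hy1def, ← hcastn0]
        push_cast [Nat.cast_sub (by omega : l ≤ n0)]
        ring
      have h2 := congrArg ZMod.val this
      rw [ZMod.val_cast_of_lt hlt] at h2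
      omega
    rw [if_neg hcase, hn1]
    have hcast : ((n0 - l : ℕ) : ℚ) = (n0 : ℚ) - l := by
      push_cast [Nat.cast_sub (by omega : l ≤ n0)]; ring
    rw [hcast]
    field_simp
    try ring
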